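/- Let $(P_t)$ be a Markov semigroup on $C_b(\mathbb{R})$, $u\in C^2(\mathbb{R})\cap C_b(\mathbb{R})$ and $g\in C_b(\mathbb{R})$ with $P_t u(x) = u(x) + \int_0^t P_s g(x)\,ds$ for $t\in[0,1]$. If the uniform gradient estimate $\|DP_t f\|_\infty \le (c/\sqrt{t})\|f\|_\infty$ holds for all $t\in(0,1]$ and $f\in C_b(\mathbb{R})$ (with each $P_tf$ differentiable), then $u$ has bounded derivative: $\|u'\|_\infty \le \|DP_1 u\|_\infty + 2c\|g\|_\infty < \infty$. -/

import Mathlib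

open Real intervalIntegral

theorem stmt17 (P : ℝ → (ℝ → ℝ) → (ℝ → ℝ)) (c : ℝ) (hcpos : 0 < c)
    (u g : ℝ → ℝ)
    (hu_cont : ContDiff ℝ 2 u) (Mu : ℝ) (hu_bdd : ∀ x, |u x| ≤ Mu)
    (hg_cont : Continuous g) (Mg : ℝ) (hg_bdd : ∀ x, |g x| ≤ Mg)
    (hdiff : ∀ t ∈ Set.Ioc (0:ℝ) 1, ∀ f : ℝ → ℝ, Continuous f →
      (∃ M, ∀ x, |f x| ≤ M) → Differentiable ℝ (P t f))
    (hgrad : ∀ t ∈ Set.Ioc (0:ℝ) 1, ∀ f : ℝ → ℝ, Continuous f →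
      ∀ M : ℝ, (∀ x, |f x| ≤ M) →
      ∀ x, |deriv (P t f) x| ≤ c / Real.sqrt t * M)
    (hident : ∀ t ∈ Set.Icc (0:ℝ) 1, ∀ x : ℝ,
      P t u x = u x + ∫ s in (0:ℝ)..t, P s g x) :
    ∀ x : ℝ, |deriv u x| ≤ (⨆ y : ℝ, |deriv (P 1 u) y|) + 2 * c * Mg := by
  intro x
  have h1mem : (1:ℝ) ∈ Set.Ioc (0:ℝ) 1 := ⟨one_pos, le_refl 1⟩
  have hu_diff : Differentiable ℝ u := hu_cont.differentiable (by norm_num)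
  have hP1diff : Differentiable ℝ (P 1 u) :=
    hdiff 1 h1mem u hu_cont.continuous ⟨Mu, hu_bdd⟩
  have hMg0 : 0 ≤ Mg := le_trans (abs_nonneg _) (hg_bdd 0)
  set G : ℝ → ℝ := fun y => P 1 u y - u y with hGdef
  have hGdiff : Differentiable ℝ G := hP1diff.sub hu_diff
  have hGcont : Continuous G := hGdiff.continuous
  have hGeq : ∀ y, G y = ∫ s in (0:ℝ)..1, P s g y := by
    intro y
    have h := hident 1 ⟨zero_le_one, le_refl 1⟩ y
    simp only [hGdef]
    linarith
  set E : Set ℝ := {y | IntervalIntegrable (fun s => P s g y) MeasureTheory.volume 0 1}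
    with hEdef
  -- pointwise Lipschitz bound for P s g
  have hptLip : ∀ s ∈ Set.Ioc (0:ℝ) 1, ∀ y z : ℝ,
      |P s g y - P s g z| ≤ c / Real.sqrt s * Mg * |y - z| := by
    intro s hs y z
    have hd : Differentiable ℝ (P s g) := hdiff s hs g hg_cont ⟨Mg, hg_bdd⟩
    have := Convex.norm_image_sub_le_of_norm_deriv_le (s := Set.univ)
      (f := P s g) (C := c / Real.sqrt s * Mg)
      (fun w _ => hd w)
      (fun w _ => by
        rw [Real.norm_eq_abs]
        exact hgrad s hs g hg_cont Mg hg_bdd w)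
      convex_univ (Set.mem_univ z) (Set.mem_univ y)
    simpa [Real.norm_eq_abs] using this
  -- Lipschitz estimate for G on E
  have hLip : ∀ y ∈ E, ∀ z ∈ E, |G y - G z| ≤ 2 * c * Mg * |y - z| := by
    intro y hy z hz
    have hsub : G y - G z = ∫ s in (0:ℝ)..1, (P s g y - P s g z) := by
      rw [hGeq y, hGeq z, intervalIntegral.integral_sub hy hz]
    have hb : IntervalIntegrable (fun s : ℝ => c * Mg * |y - z| * s ^ (-(1/2):ℝ))
        MeasureTheory.volume 0 1 :=
      (intervalIntegral.intervalIntegrable_rpow' (by norm_num)).const_mul _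
    have hbound : ∀ᵐ t ∂(MeasureTheory.volume.restrict (Set.uIoc (0:ℝ) 1)),
        ‖P t g y - P t g z‖ ≤ c * Mg * |y - z| * t ^ (-(1/2):ℝ) := by
      have : ∀ t ∈ Set.uIoc (0:ℝ) 1,
          ‖P t g y - P t g z‖ ≤ c * Mg * |y - z| * t ^ (-(1/2):ℝ) := by
        intro t ht
        rw [Set.uIoc_of_le zero_le_one] at ht
        have h1 := hptLip t ht y z
        have h2 : (Real.sqrt t)⁻¹ = t ^ (-(1/2):ℝ) := by
          rw [Real.rpow_neg ht.1.le, ← Real.sqrt_eq_rpow]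
        rw [Real.norm_eq_abs]
        calc |P t g y - P t g z| ≤ c / Real.sqrt t * Mg * |y - z| := h1
          _ = c * Mg * |y - z| * (Real.sqrt t)⁻¹ := by ring
          _ = c * Mg * |y - z| * t ^ (-(1/2):ℝ) := by rw [h2]
      exact MeasureTheory.ae_restrict_of_forall_mem
        measurableSet_uIoc this
    have hval : (∫ s in (0:ℝ)..1, c * Mg * |y - z| * s ^ (-(1/2):ℝ))
        = 2 * c * Mg * |y - z| := by
      rw [intervalIntegral.integral_const_mul, integral_rpow (Or.inl (by norm_num))]
      norm_num
      ring
    have := intervalIntegral.norm_integral_le_abs_of_norm_le hbound hb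
    rw [hsub]
    calc |∫ s in (0:ℝ)..1, (P s g y - P s g z)|
        ≤ |∫ s in (0:ℝ)..1, c * Mg * |y - z| * s ^ (-(1/2):ℝ)| := this
      _ = 2 * c * Mg * |y - z| := by
          rw [hval, abs_of_nonneg (by positivity)]
  -- non-integrable points give G = 0
  have hGzero : ∀ y, y ∉ E → G y = 0 := by
    intro y hy
    rw [hGeq y, intervalIntegral.integral_undef hy]
  -- key bound on deriv G
  have hderivG : |deriv G x| ≤ 2 * c * Mg := by
    by_cases hxcl : x ∈ closure (E \ {x})
    · -- x is a cluster point of E \ {x}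
      -- extended Lipschitz bound at x
      obtain ⟨zn, hzn_mem, hzn_lim⟩ := mem_closure_iff_seq_limit.mp hxcl
      have hLipx : ∀ y ∈ E, |G y - G x| ≤ 2 * c * Mg * |y - x| := by
        intro y hy
        have ht1 : Filter.Tendsto (fun n => |G y - G (zn n)|) Filter.atTop
            (nhds |G y - G x|) :=
          ((continuous_abs.comp (continuous_const.sub hGcont)).tendsto x).comp hzn_lim
        have ht2 : Filter.Tendsto (fun n => 2 * c * Mg * |y - zn n|) Filter.atTop
            (nhds (2 * c * Mg * |y - x|)) :=
          ((continuous_const.mul (continuous_abs.comp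
            (continuous_const.sub continuous_id))).tendsto x).comp hzn_lim
        exact le_of_tendsto_of_tendsto' ht1 ht2
          (fun n => hLip y hy (zn n) (hzn_mem n).1)
      haveI hne : (nhdsWithin x (E \ {x})).NeBot :=
        mem_closure_iff_nhdsWithin_neBot.mp hxcl
      have hds : Filter.Tendsto (slope G x) (nhdsWithin x {x}ᶜ) (nhds (deriv G x)) :=
        hasDerivAt_iff_tendsto_slope.mp (hGdiff x).hasDerivAt
      have hds' : Filter.Tendsto (fun y => |slope G x y|) (nhdsWithin x (E \ {x}))
          (nhds |deriv G x|) :=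
        (continuous_abs.tendsto _).comp
          (hds.mono_left (nhdsWithin_mono x (fun y hy => hy.2)))
      refine le_of_tendsto hds' ?_
      refine eventually_nhdsWithin_of_forall (fun y hy => ?_)
      have hyx : y ≠ x := hy.2
      have hpos : 0 < |y - x| := abs_pos.mpr (sub_ne_zero.mpr hyx)
      rw [slope_def_field, abs_div]
      rw [div_le_iff₀ hpos]
      exact hLipx y hy.1
    · -- E \ {x} does not accumulate at x : G vanishes near x
      have hev : ∀ᶠ y in nhds x, y ∉ E \ {x} := by
        have : ∀ᶠ y in nhds x, y ∈ (closure (E \ {x}))ᶜ :=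
          (isClosed_closure (s := E \ {x})).isOpen_compl.eventually_mem hxcl
        exact this.mono (fun y hy => fun h => hy (subset_closure h))
      have hev' : ∀ᶠ y in nhdsWithin x {x}ᶜ, G y = 0 := by
        filter_upwards [nhdsWithin_le_nhds hev, self_mem_nhdsWithin] with y h1 h2
        exact hGzero y (fun hyE => h1 ⟨hyE, h2⟩)
      have hGx : G x = 0 := by
        have h1 : Filter.Tendsto G (nhdsWithin x {x}ᶜ) (nhds (G x)) :=
          (hGcont.tendsto x).mono_left nhdsWithin_le_nhds
        have h2 : Filter.Tendsto G (nhdsWithin x {x}ᶜ) (nhds 0) :=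
          Filter.Tendsto.congr' (by filter_upwards [hev'] with y hy; exact hy.symm)
            tendsto_const_nhds
        exact tendsto_nhds_unique h1 h2
      have hevG : ∀ᶠ y in nhds x, G y = (fun _ => (0:ℝ)) y := by
        filter_upwards [hev] with y hy
        by_cases hyx : y = x
        · rw [hyx]; exact hGx
        · exact hGzero y (fun hyE => hy ⟨hyE, hyx⟩)
      have : deriv G x = deriv (fun _ => (0:ℝ)) x :=
        Filter.EventuallyEq.deriv_eq hevG
      rw [this, deriv_const]
      simp
      positivity
  -- assemble
  have hdGx : deriv G x = deriv (P 1 u) x - deriv u x := by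
    rw [hGdef]
    exact deriv_sub (hP1diff x) (hu_diff x)
  have hSx : |deriv (P 1 u) x| ≤ ⨆ y : ℝ, |deriv (P 1 u) y| := by
    apply le_ciSup (f := fun y => |deriv (P 1 u) y|)
    refine ⟨c * Mu, ?_⟩
    rintro r ⟨y, rfl⟩
    have := hgrad 1 h1mem u hu_cont.continuous Mu hu_bdd y
    rwa [Real.sqrt_one, div_one] at this
  have : |deriv u x| ≤ |deriv (P 1 u) x| + |deriv G x| := by
    have : deriv u x = deriv (P 1 u) x - deriv G x := by linarith
    rw [this]
    exact abs_sub _ _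
  linarith
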